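/- Let G be a group, Δ a central element, and x₁,…,x₆ ∈ G satisfying x₁x₂x₆ = x₂x₃x₄ = x₄x₅x₆ = x₂x₄x₆ = Δ. Then x₁²x₂²x₃²x₄²x₅²x₆² = Δ⁴. -/
import Mathlib


/-- The group-theoretic core of Lemma 7.3: if `Δ` is a central element of a group `G`
and `x₁,…,x₆ ∈ G` satisfy the four lantern relations
`x₁x₂x₆ = x₂x₃x₄ = x₄x₅x₆ = x₂x₄x₆ = Δ`, then
`x₁²x₂²x₃²x₄²x₅²x₆² = Δ⁴`. -/
theorem lantern_core {G : Type*} [Group G] (Δ x1 x2 x3 x4 x5 x6 : G)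
    (hΔ : ∀ g : G, Δ * g = g * Δ)
    (h1 : x1 * x2 * x6 = Δ) (h2 : x2 * x3 * x4 = Δ)
    (h3 : x4 * x5 * x6 = Δ) (h4 : x2 * x4 * x6 = Δ) :
    x1 ^ 2 * x2 ^ 2 * x3 ^ 2 * x4 ^ 2 * x5 ^ 2 * x6 ^ 2 = Δ ^ 4 := by
  have hΔ' : ∀ g : G, Δ⁻¹ * g = g * Δ⁻¹ := by
    intro g
    rw [inv_mul_eq_iff_eq_mul, ← mul_assoc, hΔ g, mul_assoc, mul_inv_cancel, mul_one]
  have c : ∀ a g : G, Δ * (a * g) = a * (Δ * g) := fun a g => by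
    rw [← mul_assoc, hΔ a, mul_assoc]
  have c' : ∀ a g : G, Δ⁻¹ * (a * g) = a * (Δ⁻¹ * g) := fun a g => by
    rw [← mul_assoc, hΔ' a, mul_assoc]
  have e2 : x2 = Δ * x6⁻¹ * x4⁻¹ := by rw [← h4]; group
  have e2' : x2⁻¹ = x4 * x6 * Δ⁻¹ := by rw [← h4]; group
  have e1 : x1 = Δ * x6⁻¹ * (x4 * x6 * Δ⁻¹) := by
    rw [← e2', ← h1]; group
  have e3 : x3 = x4 * x6 * x4⁻¹ := by
    have : x3 = x2⁻¹ * (x2 * x3 * x4) * x4⁻¹ := by group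
    rw [this, h2, ← h4]; group
  have e5 : x5 = x4⁻¹ * Δ * x6⁻¹ := by rw [← h3]; group
  rw [e1, e2, e3, e5]
  simp only [mul_assoc, pow_succ, pow_zero, one_mul, hΔ x4, hΔ x6, hΔ x4⁻¹, hΔ x6⁻¹,
    hΔ' x4, hΔ' x6, hΔ' x4⁻¹, hΔ' x6⁻¹,
    c x4, c x6, c x4⁻¹, c x6⁻¹, c' x4, c' x6, c' x4⁻¹, c' x6⁻¹,
    mul_inv_cancel_left, inv_mul_cancel_left, mul_inv_cancel, inv_mul_cancel, mul_one]
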